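/- arXiv:2402.16166 — 2 statements merged into one kernel-verified Lean document; each statement's English description precedes it below -/
import Mathlib

section
/- With the unicyclic setup and z_0 a leaf of highest level with level(z_0) = 1 whose unique neighbor is the cycle vertex v_1, write N(v_1) = {z_0, z_1, …, z_s} ∪ {v_2, v_m} where z_1,…,z_s are leaves. Then ν_3(G) = max{ν_3(G_{z_0,1}), 1 + ν_3(G_{z_0,2})} if s ≥ 1, and ν_3(G) = max{ν_3(G_{z_0,1}), 1 + ν_3(G_{z_0,3}), 1 + ν_3(G_{z_0,4})} if s = 0. -/
noncomputable section

namespace PathIdeals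

open MvPolynomial

variable {k : Type*} [Field k] {V : Type*} [Fintype V] [LinearOrder V]

/-- Transport a graded piece along an equality of degrees. -/
def castLinear (k : Type*) [Field k] (N : ℕ → Type*) [∀ a, AddCommGroup (N a)]
    [∀ a, Module k (N a)] {a b : ℕ} (h : a = b) : N a →ₗ[k] N b := by
  subst h; exact LinearMap.id

/-- The Koszul-type differential computing `Tor^S(k, N)` for a graded module `N` over
`S = k[x_v : v ∈ V]` given by its graded pieces `N a` together with the multiplication maps
`x_v ⬝ : N a → N (a+1)`.  The map goes from homological degree `i`, internal degree `j`
(so coefficients in `N (j - i)`) to homological degree `i - 1`. -/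
def koszulMap (k : Type*) [Field k] {V : Type*} [Fintype V] [LinearOrder V]
    (N : ℕ → Type*) [∀ a, AddCommGroup (N a)] [∀ a, Module k (N a)]
    (mul : V → ∀ a : ℕ, N a →ₗ[k] N (a + 1)) (i j : ℕ) :
    ({s : Finset V // s.card = i} →₀ N (j - i)) →ₗ[k]
      ({s : Finset V // s.card = i - 1} →₀ N (j - (i - 1))) :=
  if h : 1 ≤ i ∧ i ≤ j then
    Finsupp.lsum k fun s : {s : Finset V // s.card = i} =>
      ∑ v ∈ s.1.attach,
        ((-1 : k) ^ (s.1.filter (fun w => w < v.1)).card) •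
          ((Finsupp.lsingle
              (⟨s.1.erase v.1, by rw [Finset.card_erase_of_mem v.2, s.2]⟩ :
                {s : Finset V // s.card = i - 1})).comp
            ((castLinear k N (by omega : (j - i) + 1 = j - (i - 1))).comp (mul v.1 (j - i))))
  else 0

/-- The `(i,j)`-th graded Betti number `β_{i,j} = dim_k Tor_i^S(k, N)_j` of the graded module
`N`, computed as the dimension of the homology of the Koszul complex tensored with `N`.
(For modules generated in non-negative degrees, such as ideals and their quotient rings,
the Betti numbers vanish when `j < i`.) -/
def bettiAux (k : Type*) [Field k] {V : Type*} [Fintype V] [LinearOrder V]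
    (N : ℕ → Type*) [∀ a, AddCommGroup (N a)] [∀ a, Module k (N a)]
    (mul : V → ∀ a : ℕ, N a →ₗ[k] N (a + 1)) (i j : ℕ) : ℕ :=
  if j < i then 0
  else
    Module.finrank k
      (↥(LinearMap.ker (koszulMap k N mul i j)) ⧸
        Submodule.comap (LinearMap.ker (koszulMap k N mul i j)).subtype
          (LinearMap.range (koszulMap k N mul (i + 1) j)))

/-- The degree-`a` graded piece of a homogeneous ideal `I ⊆ S`, as a `k`-subspace. -/
def idealPiece (k : Type*) [Field k] {V : Type*} (I : Ideal (MvPolynomial V k)) (a : ℕ) :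
    Submodule k (MvPolynomial V k) :=
  Submodule.restrictScalars k I ⊓ homogeneousSubmodule V k a

/-- Multiplication by the variable `x_v` on graded pieces of an ideal. -/
def idealMul {k : Type*} [Field k] {V : Type*} (I : Ideal (MvPolynomial V k)) (v : V) (a : ℕ) :
    ↥(idealPiece k I a) →ₗ[k] ↥(idealPiece k I (a + 1)) where
  toFun f := ⟨X v * f.1, by
    obtain ⟨h1, h2⟩ := Submodule.mem_inf.mp f.2
    refine Submodule.mem_inf.mpr ⟨I.mul_mem_left _ h1, ?_⟩
    rw [mem_homogeneousSubmodule] at h2 ⊢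
    simpa [add_comm] using (isHomogeneous_X k v).mul h2⟩
  map_add' f g := by ext; simp [mul_add]
  map_smul' c f := by ext; simp [mul_smul_comm]

/-- The `(i,j)`-th graded Betti number `β_{i,j}(I) = dim_k Tor_i^S(k, I)_j` of a homogeneous
ideal `I` of the polynomial ring `S = k[x_v : v ∈ V]`. -/
def gradedBetti (k : Type*) [Field k] {V : Type*} [Fintype V] [LinearOrder V]
    (I : Ideal (MvPolynomial V k)) (i j : ℕ) : ℕ :=
  bettiAux k (fun a => ↥(idealPiece k I a)) (idealMul I) i j

/-- The projective dimension `pd(I) = sup { i | β_{i,j}(I) ≠ 0 for some j }` of a homogeneous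
ideal of the polynomial ring. -/
def pdIdeal (k : Type*) [Field k] {V : Type*} [Fintype V] [LinearOrder V]
    (I : Ideal (MvPolynomial V k)) : ℕ :=
  sSup {i | ∃ j, gradedBetti k I i j ≠ 0}

/-- The Castelnuovo–Mumford regularity `reg(I) = sup { j - i | β_{i,j}(I) ≠ 0 }` of a
homogeneous ideal of the polynomial ring. -/
def regIdeal (k : Type*) [Field k] {V : Type*} [Fintype V] [LinearOrder V]
    (I : Ideal (MvPolynomial V k)) : ℕ :=
  sSup {r | ∃ i, gradedBetti k I i (i + r) ≠ 0}

/-- Multiplication by `x_v` on the (constant) ungraded module underlying an ideal. -/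
def idealMulTotal {k : Type*} [Field k] {V : Type*} (I : Ideal (MvPolynomial V k)) (v : V)
    (_ : ℕ) : ↥(Submodule.restrictScalars k I) →ₗ[k] ↥(Submodule.restrictScalars k I) where
  toFun f := ⟨X v * f.1, I.mul_mem_left _ f.2⟩
  map_add' f g := by ext; simp [mul_add]
  map_smul' c f := by ext; simp [mul_smul_comm]

/-- The `i`-th total Betti number `β_i(I) = dim_k Tor_i^S(k, I)` of a homogeneous ideal of
the polynomial ring, computed as the dimension of ungraded Koszul homology. -/
def totalBetti (k : Type*) [Field k] {V : Type*} [Fintype V] [LinearOrder V]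
    (I : Ideal (MvPolynomial V k)) (i : ℕ) : ℕ :=
  bettiAux k (fun _ => ↥(Submodule.restrictScalars k I)) (idealMulTotal I) i (i + 1)

/-- `P = I + J` is a Betti splitting if `β_i(P) = β_i(I) + β_i(J) + β_{i-1}(I ∩ J)`
for all `i ≥ 0` (where `β_{-1} = 0`). -/
def IsBettiSplitting (k : Type*) [Field k] {V : Type*} [Fintype V] [LinearOrder V]
    (P I J : Ideal (MvPolynomial V k)) : Prop :=
  P = I + J ∧ totalBetti k P 0 = totalBetti k I 0 + totalBetti k J 0 ∧
    ∀ i : ℕ, totalBetti k P (i + 1) =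
      totalBetti k I (i + 1) + totalBetti k J (i + 1) + totalBetti k (I ⊓ J) i

/-- The subspace of the degree-`a` homogeneous component of `S` consisting of elements of a
homogeneous ideal `I`. -/
def quotSub (k : Type*) [Field k] {V : Type*} (I : Ideal (MvPolynomial V k)) (a : ℕ) :
    Submodule k ↥(homogeneousSubmodule V k a) :=
  Submodule.comap (homogeneousSubmodule V k a).subtype (Submodule.restrictScalars k I)

/-- The degree-`a` graded piece of the quotient ring `S/I`. -/
def quotPiece (k : Type*) [Field k] {V : Type*} (I : Ideal (MvPolynomial V k)) (a : ℕ) :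
    Type _ :=
  ↥(homogeneousSubmodule V k a) ⧸ quotSub k I a

instance (I : Ideal (MvPolynomial V k)) (a : ℕ) : AddCommGroup (quotPiece k I a) :=
  inferInstanceAs (AddCommGroup (↥(homogeneousSubmodule V k a) ⧸ quotSub k I a))

instance (I : Ideal (MvPolynomial V k)) (a : ℕ) : Module k (quotPiece k I a) :=
  inferInstanceAs (Module k (↥(homogeneousSubmodule V k a) ⧸ quotSub k I a))

/-- Multiplication by `x_v` on the homogeneous components of `S`. -/
def homogMul (k : Type*) [Field k] {V : Type*} (v : V) (a : ℕ) :
    ↥(homogeneousSubmodule V k a) →ₗ[k] ↥(homogeneousSubmodule V k (a + 1)) where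
  toFun f := ⟨X v * f.1, by
    have h2 := (mem_homogeneousSubmodule _ _).mp f.2
    rw [mem_homogeneousSubmodule]
    simpa [add_comm] using (isHomogeneous_X k v).mul h2⟩
  map_add' f g := by ext; simp [mul_add]
  map_smul' c f := by ext; simp [mul_smul_comm]

/-- Multiplication by `x_v` on graded pieces of the quotient ring `S/I`. -/
def quotMul {k : Type*} [Field k] {V : Type*} (I : Ideal (MvPolynomial V k)) (v : V) (a : ℕ) :
    quotPiece k I a →ₗ[k] quotPiece k I (a + 1) :=
  Submodule.mapQ (quotSub k I a) (quotSub k I (a + 1)) (homogMul k v a)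
    (fun _ hx => I.mul_mem_left _ hx)

/-- The Castelnuovo–Mumford regularity `reg(S/I) = sup { j - i | β_{i,j}(S/I) ≠ 0 }` of the
quotient of the polynomial ring by a homogeneous ideal. -/
def regQuot (k : Type*) [Field k] {V : Type*} [Fintype V] [LinearOrder V]
    (I : Ideal (MvPolynomial V k)) : ℕ :=
  sSup {r | ∃ i, bettiAux k (quotPiece k I) (quotMul I) i (i + r) ≠ 0}

/-! ### Graphs, path ideals and path induced matching numbers -/

/-- `l` is (the vertex list of) a `t`-path of `G`: `t` distinct vertices with consecutive
vertices adjacent. -/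
def IsPathList {V : Type*} (G : SimpleGraph V) (t : ℕ) (l : List V) : Prop :=
  l.length = t ∧ l.Nodup ∧ l.Chain' G.Adj

/-- The `t`-path ideal `I_t(G)` of the graph `G`, generated by the monomials
`x_{u_1} ⋯ x_{u_t}` over all `t`-paths `u_1, …, u_t` of `G`. -/
def pathIdeal (k : Type*) [Field k] {V : Type*} (G : SimpleGraph V) (t : ℕ) :
    Ideal (MvPolynomial V k) :=
  Ideal.span {f | ∃ l : List V, IsPathList G t l ∧ f = (l.map X).prod}

/-- A family of `t`-paths indexed by `Fin n` is a `t`-path induced matching of `G` if the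
paths are pairwise vertex-disjoint and the only edges of `G` between vertices of the paths
are the edges of the paths. -/
def IsPathInducedMatching {V : Type*} (G : SimpleGraph V) (t : ℕ) {n : ℕ}
    (P : Fin n → List V) : Prop :=
  (∀ a, IsPathList G t (P a)) ∧
    (∀ a b, a ≠ b → ∀ x, x ∈ P a → x ∉ P b) ∧
    (∀ x y : V, (∃ a, x ∈ P a) → (∃ b, y ∈ P b) → G.Adj x y →
      ∃ a, [x, y] <:+: P a ∨ [y, x] <:+: P a)

/-- The `t`-path induced matching number `ν_t(G)`: the largest size of a `t`-path induced
matching of `G`. -/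
def pathNu {V : Type*} (G : SimpleGraph V) (t : ℕ) : ℕ :=
  sSup {n | ∃ P : Fin n → List V, IsPathInducedMatching G t P}

/-- The induced subgraph of `G` on a set `A` of vertices, viewed as a graph on the same
vertex set (all vertices outside `A` become isolated). -/
def inducedOn {V : Type*} (G : SimpleGraph V) (A : Set V) : SimpleGraph V where
  Adj x y := G.Adj x y ∧ x ∈ A ∧ y ∈ A
  symm := ⟨fun _ _ ⟨h, hx, hy⟩ => ⟨h.symm, hy, hx⟩⟩
  loopless := ⟨fun _ ⟨h, _, _⟩ => G.irrefl h⟩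

/-- The set of neighbors of a set of vertices. -/
def nbhd {V : Type*} (G : SimpleGraph V) (A : Set V) : Set V :=
  {y | ∃ x ∈ A, G.Adj x y}

/-- The closed neighborhood `N[A] = A ∪ N(A)` of a set of vertices. -/
def closedNbhd {V : Type*} (G : SimpleGraph V) (A : Set V) : Set V :=
  A ∪ nbhd G A

/-- A leaf of a graph is a vertex with a unique neighbor. -/
def IsLeaf {V : Type*} (G : SimpleGraph V) (x : V) : Prop :=
  ∃! y, G.Adj x y

/-- The level of a vertex `y`: its distance to the set of distinguished vertices
(the cycle vertices, resp. the root in the tree case). -/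
def levelTo {V : Type*} (G : SimpleGraph V) {m : ℕ} (v : Fin m → V) (y : V) : ℕ :=
  sInf {d | ∃ i, G.dist (v i) y = d}

/-- `v` lists the vertices of a cycle of `G` (in cyclic order). -/
def IsCycleOn {V : Type*} (G : SimpleGraph V) {m : ℕ} [NeZero m] (v : Fin m → V) : Prop :=
  Function.Injective v ∧ ∀ i : Fin m, G.Adj (v i) (v (i + 1))

/-- Every cycle of `G` has its vertices among `v 0, …, v (m-1)`; together with `IsCycleOn`
this says that the cycle on `v` is the unique cycle of `G`. -/
def UniqueCycle {V : Type*} (G : SimpleGraph V) {m : ℕ} (v : Fin m → V) : Prop :=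
  ∀ (x : V) (c : G.Walk x x), c.IsCycle → ∀ y ∈ c.support, y ∈ Set.range v

/-- `G` has at most one cycle: either `G` is a tree (and `m = 1`, `v 0` being a chosen root),
or `G` has the unique cycle `v 0, …, v (m-1)` of length `m ≥ 3`. -/
def AtMostOneCycle {V : Type*} (G : SimpleGraph V) {m : ℕ} [NeZero m] (v : Fin m → V) : Prop :=
  (m = 1 ∧ G.IsAcyclic) ∨ (3 ≤ m ∧ IsCycleOn G v ∧ UniqueCycle G v)

/-- The graph `Γ_G(C)`: the induced subgraph of `G` obtained by deleting the boundary
`∂(C) = N(C) \ C` of the cycle with vertex set `Cset`. -/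
def Gamma {V : Type*} (G : SimpleGraph V) (Cset : Set V) : SimpleGraph V :=
  inducedOn G (nbhd G Cset \ Cset)ᶜ

/-- A graph (containing the cycle with vertex set `Cset`) is `3`-proximal if
`ν_3(G) = ν_3(Γ_G(C))`. -/
def IsProximal3 {V : Type*} (G : SimpleGraph V) (Cset : Set V) : Prop :=
  pathNu G 3 = pathNu (Gamma G Cset) 3

section Aux

variable {V : Type*} {G : SimpleGraph V}

lemma exists_path3 {l : List V} (h : IsPathList G 3 l) :
    ∃ a b c, l = [a, b, c] ∧ G.Adj a b ∧ G.Adj b c ∧ a ≠ b ∧ a ≠ c ∧ b ≠ c := by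
  obtain ⟨hlen, hnd, hch⟩ := h
  obtain ⟨a, b, c, rfl⟩ := List.length_eq_three.mp hlen
  simp only [List.nodup_cons, List.mem_cons, List.Chain', List.isChain_cons_cons, List.isChain_singleton,
    and_true, List.mem_singleton, List.not_mem_nil, or_false, not_or,
    List.nodup_nil] at hnd hch
  exact ⟨a, b, c, rfl, hch.1, hch.2, hnd.1.1, hnd.1.2, hnd.2.1⟩

lemma infix_pair_three {x y a b c : V} (h : [x, y] <:+: [a, b, c]) :
    (x = a ∧ y = b) ∨ (x = b ∧ y = c) := by
  obtain ⟨s, t, hst⟩ := h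
  match s, t, hst with
  | [], t, hst => left; simp at hst; exact ⟨hst.1, hst.2.1⟩
  | [u], t, hst => right; simp at hst; exact ⟨hst.2.1, hst.2.2.1⟩
  | u :: w :: r, t, hst =>
      exfalso
      have := congrArg List.length hst
      simp at this; omega

lemma mem_of_infix_pair {x y : V} {l : List V} (h : [x, y] <:+: l ∨ [y, x] <:+: l) :
    x ∈ l ∧ y ∈ l := by
  rcases h with h | h <;> exact ⟨h.subset (by simp), h.subset (by simp)⟩

lemma zero_mem_matchingSet :
    0 ∈ {n | ∃ P : Fin n → List V, IsPathInducedMatching G 3 P} :=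
  ⟨fun a => a.elim0, fun a => a.elim0, fun a => a.elim0,
    fun _ _ hx _ _ => (hx.choose).elim0⟩

lemma bddAbove_matchingSet [Fintype V] :
    BddAbove {n | ∃ P : Fin n → List V, IsPathInducedMatching G 3 P} := by
  refine ⟨Fintype.card V, fun n hn => ?_⟩
  obtain ⟨P, hP⟩ := hn
  have hne : ∀ a : Fin n, P a ≠ [] := by
    intro a h
    have := (hP.1 a).1
    rw [h] at this
    simp at this
  have : Function.Injective fun a : Fin n => (P a).head (hne a) := by
    intro a b hab
    by_contra hab'
    refine hP.2.1 a b hab' _ (List.head_mem (hne a)) ?_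
    simp only at hab
    rw [hab]
    exact List.head_mem (hne b)
  simpa using Fintype.card_le_of_injective _ this

lemma le_pathNu [Fintype V] {n : ℕ}
    (h : ∃ P : Fin n → List V, IsPathInducedMatching G 3 P) : n ≤ pathNu G 3 :=
  le_csSup bddAbove_matchingSet h

lemma pathNu_le {M : ℕ}
    (h : ∀ n, (∃ P : Fin n → List V, IsPathInducedMatching G 3 P) → n ≤ M) :
    pathNu G 3 ≤ M :=
  csSup_le ⟨0, zero_mem_matchingSet⟩ h

lemma exists_matching_pathNu [Fintype V] (G : SimpleGraph V) :
    ∃ P : Fin (pathNu G 3) → List V, IsPathInducedMatching G 3 P :=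
  Nat.sSup_mem ⟨0, zero_mem_matchingSet⟩ bddAbove_matchingSet

lemma matching_induced_to_G {A : Set V} {n : ℕ} {P : Fin n → List V}
    (h : IsPathInducedMatching (inducedOn G A) 3 P) :
    IsPathInducedMatching G 3 P ∧ ∀ a, ∀ x ∈ P a, x ∈ A := by
  have hmem : ∀ a, ∀ x ∈ P a, x ∈ A := by
    intro a x hx
    obtain ⟨u, w, c, hl, h1, h2, _⟩ := exists_path3 (h.1 a)
    rw [hl] at hx
    simp only [List.mem_cons, List.mem_singleton, List.not_mem_nil, or_false] at hx
    rcases hx with rfl | rfl | rfl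
    · exact h1.2.1
    · exact h1.2.2
    · exact h2.2.2
  refine ⟨⟨fun a => ?_, h.2.1, fun x y hx hy hadj => ?_⟩, hmem⟩
  · obtain ⟨u, w, c, hl, h1, h2, hn1, hn2, hn3⟩ := exists_path3 (h.1 a)
    refine ⟨by rw [hl]; rfl, by rw [hl]; simp [hn1, hn2, hn3], ?_⟩
    rw [hl]
    simp [List.Chain', List.isChain_cons_cons, h1.1, h2.1]
  · obtain ⟨a, hxa⟩ := hx
    obtain ⟨b, hyb⟩ := hy
    exact h.2.2 x y ⟨a, hxa⟩ ⟨b, hyb⟩ ⟨hadj, hmem a x hxa, hmem b y hyb⟩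

lemma matching_G_to_induced {A : Set V} {n : ℕ} {P : Fin n → List V}
    (h : IsPathInducedMatching G 3 P) (hA : ∀ a, ∀ x ∈ P a, x ∈ A) :
    IsPathInducedMatching (inducedOn G A) 3 P := by
  refine ⟨fun a => ?_, h.2.1, fun x y hx hy hadj => h.2.2 x y hx hy hadj.1⟩
  obtain ⟨u, w, c, hl, h1, h2, hn1, hn2, hn3⟩ := exists_path3 (h.1 a)
  have hu : u ∈ A := hA a u (by rw [hl]; simp)
  have hw : w ∈ A := hA a w (by rw [hl]; simp)
  have hc : c ∈ A := hA a c (by rw [hl]; simp)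
  refine ⟨by rw [hl]; rfl, by rw [hl]; simp [hn1, hn2, hn3], ?_⟩
  rw [hl]
  exact List.isChain_cons_cons.mpr ⟨⟨h1, hu, hw⟩, List.isChain_cons_cons.mpr
    ⟨⟨h2, hw, hc⟩, List.isChain_singleton c⟩⟩

lemma matching_drop {n : ℕ} {P : Fin (n + 1) → List V}
    (h : IsPathInducedMatching G 3 P) (a0 : Fin (n + 1)) :
    IsPathInducedMatching G 3 (P ∘ a0.succAbove) := by
  refine ⟨fun a => h.1 _, fun a b hab x hx => h.2.1 _ _
    (fun he => hab (Fin.succAbove_right_injective he)) x hx, ?_⟩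
  intro x y hx hy hadj
  obtain ⟨a, hxa⟩ := hx
  obtain ⟨b, hyb⟩ := hy
  obtain ⟨c, hc⟩ := h.2.2 x y ⟨_, hxa⟩ ⟨_, hyb⟩ hadj
  have hxc : x ∈ P c := (mem_of_infix_pair hc).1
  have hcne : c ≠ a0 := by
    intro hh
    subst hh
    exact h.2.1 _ _ (Fin.succAbove_ne _ a) x hxa hxc
  obtain ⟨c', rfl⟩ := Fin.exists_succAbove_eq hcne
  exact ⟨c', hc⟩

lemma matching_avoid {n : ℕ} {P : Fin n → List V}
    (h : IsPathInducedMatching G 3 P) {a0 b : Fin n} {u x : V}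
    (hu : u ∈ P a0) (hb : b ≠ a0) (hx : x ∈ P b) : x ≠ u ∧ ¬G.Adj u x := by
  constructor
  · rintro rfl
    exact h.2.1 a0 b (Ne.symm hb) x hu hx
  · intro hadj
    obtain ⟨c, hc⟩ := h.2.2 u x ⟨a0, hu⟩ ⟨b, hx⟩ hadj
    obtain ⟨huc, hxc⟩ := mem_of_infix_pair hc
    by_cases hca : c = a0
    · subst hca
      exact h.2.1 c b hb.symm x hxc hx
    · exact h.2.1 c a0 hca u huc hu

lemma matching_cons {n : ℕ} {P : Fin n → List V}
    (h : IsPathInducedMatching G 3 P) {a b c : V}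
    (hab : G.Adj a b) (hbc : G.Adj b c) (hac : ¬G.Adj a c) (hne : a ≠ c)
    (hdis : ∀ i, ∀ x ∈ ([a, b, c] : List V), x ∉ P i)
    (hnoe : ∀ x ∈ ([a, b, c] : List V), ∀ i, ∀ y ∈ P i, ¬G.Adj x y) :
    IsPathInducedMatching G 3 (Fin.cons [a, b, c] P) := by
  have hq : IsPathList G 3 [a, b, c] := by
    refine ⟨rfl, by simp [hab.ne, hbc.ne, hne], ?_⟩
    exact List.isChain_cons_cons.mpr ⟨hab, List.isChain_cons_cons.mpr ⟨hbc, List.isChain_singleton c⟩⟩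
  refine ⟨fun i => ?_, fun i j hij x hx => ?_, fun x y hx hy hadj => ?_⟩
  · induction i using Fin.cases with
    | zero => simpa using hq
    | succ i => simpa using h.1 i
  · induction i using Fin.cases with
    | zero =>
      induction j using Fin.cases with
      | zero => exact absurd rfl hij
      | succ j =>
        simp only [Fin.cons_zero] at hx
        simpa using hdis j x hx
    | succ i =>
      induction j using Fin.cases with
      | zero =>
        simp only [Fin.cons_succ] at hx
        simp only [Fin.cons_zero]
        intro hxq
        exact hdis i x hxq hx
      | succ j =>
        simp only [Fin.cons_succ] at hx ⊢
        exact h.2.1 i j (fun he => hij (by rw [he])) x hx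
  · obtain ⟨i, hxi⟩ := hx
    obtain ⟨j, hyj⟩ := hy
    induction i using Fin.cases with
    | zero =>
      induction j using Fin.cases with
      | zero =>
        simp only [Fin.cons_zero, List.mem_cons, List.mem_singleton,
          List.not_mem_nil, or_false] at hxi hyj
        refine ⟨0, ?_⟩
        simp only [Fin.cons_zero]
        rcases hxi with rfl | rfl | rfl <;> rcases hyj with rfl | rfl | rfl
        · exact absurd hadj (G.irrefl)
        · exact Or.inl ⟨[], [c], rfl⟩
        · exact absurd hadj hac
        · exact Or.inr ⟨[], [c], rfl⟩
        · exact absurd hadj (G.irrefl)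
        · exact Or.inl ⟨[a], [], rfl⟩
        · exact absurd hadj (fun hh => hac hh.symm)
        · exact Or.inr ⟨[a], [], rfl⟩
        · exact absurd hadj (G.irrefl)
      | succ j =>
        simp only [Fin.cons_zero] at hxi
        simp only [Fin.cons_succ] at hyj
        exact absurd hadj (hnoe x hxi j y hyj)
    | succ i =>
      induction j using Fin.cases with
      | zero =>
        simp only [Fin.cons_succ] at hxi
        simp only [Fin.cons_zero] at hyj
        exact absurd hadj.symm (hnoe y hyj i x hxi)
      | succ j =>
        simp only [Fin.cons_succ] at hxi hyj
        obtain ⟨c', hc'⟩ := h.2.2 x y ⟨i, hxi⟩ ⟨j, hyj⟩ hadj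
        exact ⟨c'.succ, by simpa using hc'⟩

end Aux

/-- **Lemma (recursion for `ν_3`, leaf of level `1`).**
With the unicyclic setup and `z_0` a leaf of highest level with `level(z_0) = 1` whose
unique neighbor is the cycle vertex `v_1`, write `N(v_1) = {z_0, z_1, …, z_s} ∪ {v_2, v_m}`
where `z_1, …, z_s` are leaves.  Then
`ν_3(G) = max(ν_3(G_{z_0,1}), 1 + ν_3(G_{z_0,2}))` if `s ≥ 1`, and
`ν_3(G) = max(ν_3(G_{z_0,1}), 1 + ν_3(G_{z_0,3}), 1 + ν_3(G_{z_0,4}))` if `s = 0`. -/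
theorem pathNu_three_recursion_level_one
    {V : Type*} [Fintype V] [LinearOrder V]
    (G : SimpleGraph V) (hconn : G.Connected)
    (m : ℕ) [NeZero m] (hm : 3 ≤ m) (v : Fin m → V)
    (hcyc : IsCycleOn G v) (huniq : UniqueCycle G v)
    (s : ℕ) (z : Fin (s + 1) → V) (hz : Function.Injective z)
    (hzy : ∀ a, G.neighborSet (z a) = {v 0})
    (hnv : G.neighborSet (v 0) = Set.range z ∪ {v 1, v (-1)})
    (hlevel : levelTo G v (z 0) = 1)
    (hhigh : ∀ w, IsLeaf G w → levelTo G v w ≤ levelTo G v (z 0)) :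
    (1 ≤ s →
      pathNu G 3 = max (pathNu (inducedOn G (Set.range z)ᶜ) 3)
        (1 + pathNu (inducedOn G (closedNbhd G {v 0})ᶜ) 3)) ∧
    (s = 0 →
      pathNu G 3 = max (max (pathNu (inducedOn G (Set.range z)ᶜ) 3)
          (1 + pathNu (inducedOn G (closedNbhd G ({v 0, v 1} : Set V))ᶜ) 3))
        (1 + pathNu (inducedOn G (closedNbhd G ({v 0, v (-1)} : Set V))ᶜ) 3)) := by

  clear hconn huniq hlevel hhigh
  obtain ⟨m', rfl⟩ : ∃ m', m = m' + 3 := ⟨m - 3, by omega⟩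
  clear hm
  -- basic adjacency facts on the cycle
  have h20 : (2 : Fin (m' + 3)) ≠ 0 := by simp [Fin.ext_iff, Nat.mod_eq_of_lt (show 2 < m' + 3 by omega)]
  have hm20 : (-2 : Fin (m' + 3)) ≠ 0 := by
    intro h
    have h2 : (-2 : Fin (m' + 3)) + 2 = 0 + 2 := by rw [h]
    simp at h2
    exact absurd h2.symm (by simp [Fin.ext_iff, Nat.mod_eq_of_lt (show 2 < m' + 3 by omega)])
  have hadj01 : G.Adj (v 0) (v 1) := by simpa using hcyc.2 0
  have hadjm0 : G.Adj (v (-1)) (v 0) := by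
    have h := hcyc.2 (-1)
    rwa [show ((-1 : Fin (m' + 3)) + 1) = 0 by open Fin.CommRing in ring] at h
  have hadj12 : G.Adj (v 1) (v 2) := by
    have h := hcyc.2 1
    rwa [show ((1 : Fin (m' + 3)) + 1) = 2 by open Fin.CommRing in ring] at h
  have hadjm2 : G.Adj (v (-2)) (v (-1)) := by
    have h := hcyc.2 (-2)
    rwa [show ((-2 : Fin (m' + 3)) + 1) = -1 by open Fin.CommRing in ring] at h
  -- facts about the leaves z
  have hz_adj : ∀ (a : Fin (s + 1)) (w : V), G.Adj (z a) w ↔ w = v 0 := by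
    intro a w
    have h1 : w ∈ G.neighborSet (z a) ↔ w ∈ ({v 0} : Set V) := by rw [hzy a]
    simpa using h1
  have hzv0 : ∀ a, G.Adj (v 0) (z a) := fun a => ((hz_adj a (v 0)).mpr rfl).symm
  have hz_ne_v0 : ∀ a, z a ≠ v 0 := fun a => ((hz_adj a (v 0)).mpr rfl).ne
  have hz0_ne_v1 : z 0 ≠ v 1 := by
    intro h
    have h2 : G.Adj (z 0) (v 2) := h ▸ hadj12
    exact h20 (hcyc.1 ((hz_adj 0 (v 2)).mp h2))
  have hz0_ne_vm : z 0 ≠ v (-1) := by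
    intro h
    have h2 : G.Adj (z 0) (v (-2)) := h ▸ hadjm2.symm
    exact hm20 (hcyc.1 ((hz_adj 0 (v (-2))).mp h2))
  -- membership in complements of closed neighborhoods
  have mem_cN1 : ∀ x : V, x ∈ (closedNbhd G ({v 0} : Set V))ᶜ ↔
      x ≠ v 0 ∧ ¬G.Adj (v 0) x := by
    intro x
    simp [closedNbhd, nbhd]
  have mem_cN2 : ∀ p q x : V, x ∈ (closedNbhd G ({p, q} : Set V))ᶜ ↔
      x ≠ p ∧ x ≠ q ∧ ¬G.Adj p x ∧ ¬G.Adj q x := by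
    intro p q x
    simp [closedNbhd, nbhd]
    tauto
  -- structure of a path containing a leaf z j
  have struct : ∀ {n : ℕ} (P : Fin n → List V), IsPathInducedMatching G 3 P →
      ∀ (a0 : Fin n) (j : Fin (s + 1)), z j ∈ P a0 →
      ∃ w, (P a0 = [z j, v 0, w] ∨ P a0 = [w, v 0, z j]) ∧ w ≠ z j ∧ G.Adj (v 0) w := by
    intro n P hP a0 j hj
    obtain ⟨x, y, c, hl, h1, h2, hn1, hn2, hn3⟩ := exists_path3 (hP.1 a0)
    rw [hl] at hj
    simp only [List.mem_cons, List.mem_singleton, List.not_mem_nil, or_false] at hj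
    rcases hj with hj | hj | hj
    · subst hj
      have hy : y = v 0 := (hz_adj j y).mp h1
      subst hy
      exact ⟨c, Or.inl hl, fun hcc => hn2 hcc.symm, h2⟩
    · exfalso
      subst hj
      have hx : x = v 0 := (hz_adj j x).mp h1.symm
      have hc : c = v 0 := (hz_adj j c).mp h2
      exact hn2 (hx.trans hc.symm)
    · subst hj
      have hy : y = v 0 := (hz_adj j y).mp h2.symm
      subst hy
      exact ⟨x, Or.inr hl, hn2, h1.symm⟩
  constructor
  · -- case s ≥ 1
    intro hs
    apply le_antisymm
    · apply pathNu_le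
      rintro n ⟨P, hP⟩
      by_cases hzf : ∀ (a : Fin n) (jx : Fin (s + 1)), z jx ∉ P a
      · refine le_trans (le_pathNu ⟨P, matching_G_to_induced hP ?_⟩) (le_max_left _ _)
        intro a x hx
        simp only [Set.mem_compl_iff, Set.mem_range, not_exists]
        intro jx hjx
        exact hzf a jx (hjx ▸ hx)
      · push_neg at hzf
        obtain ⟨a0, j, hj⟩ := hzf
        rcases n with _ | n
        · exact a0.elim0
        obtain ⟨w, hw, hwne, hwadj⟩ := struct P hP a0 j hj
        have hv0 : v 0 ∈ P a0 := by rcases hw with h | h <;> simp [h]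
        refine le_trans ?_ (le_max_right _ _)
        have hP' := matching_drop hP a0
        have hn' : n ≤ pathNu (inducedOn G (closedNbhd G ({v 0} : Set V))ᶜ) 3 := by
          refine le_pathNu ⟨_, matching_G_to_induced hP' ?_⟩
          intro b x hx
          obtain ⟨hne', hnadj⟩ := matching_avoid hP hv0 (Fin.succAbove_ne a0 b) hx
          exact (mem_cN1 x).mpr ⟨hne', hnadj⟩
        omega
    · apply max_le
      · obtain ⟨P, hP⟩ := exists_matching_pathNu (inducedOn G (Set.range z)ᶜ)
        exact le_pathNu ⟨P, (matching_induced_to_G hP).1⟩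
      · obtain ⟨P, hP⟩ := exists_matching_pathNu (inducedOn G (closedNbhd G ({v 0} : Set V))ᶜ)
        obtain ⟨hPG, hPA⟩ := matching_induced_to_G hP
        have hj1 : (⟨1, by omega⟩ : Fin (s + 1)) ≠ 0 := by
          intro h
          simpa [Fin.ext_iff] using h
        have hqmem : ∀ x ∈ ([z ⟨1, by omega⟩, v 0, z 0] : List V),
            x ∈ closedNbhd G ({v 0} : Set V) := by
          intro x hx
          simp only [List.mem_cons, List.mem_singleton, List.not_mem_nil, or_false] at hx
          rcases hx with rfl | rfl | rfl
          · exact Or.inr ⟨v 0, rfl, hzv0 _⟩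
          · exact Or.inl rfl
          · exact Or.inr ⟨v 0, rfl, hzv0 _⟩
        have hcons := matching_cons hPG
          ((hz_adj ⟨1, by omega⟩ (v 0)).mpr rfl) (hzv0 0)
          (fun h => hz_ne_v0 0 ((hz_adj _ (z 0)).mp h))
          (fun h => hj1 (hz h))
          (fun i x hxq hxp => ((mem_cN1 x).mp (hPA i x hxp)).elim
            (fun h1 h2 => by
              rcases (by simpa using hxq : x = z ⟨1, by omega⟩ ∨ x = v 0 ∨ x = z 0) with
                rfl | rfl | rfl
              · exact h2 (hzv0 _)
              · exact h1 rfl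
              · exact h2 (hzv0 _)))
          (fun x hxq i y hyp hadj => by
            obtain ⟨hy1, hy2⟩ := (mem_cN1 y).mp (hPA i y hyp)
            rcases (by simpa using hxq : x = z ⟨1, by omega⟩ ∨ x = v 0 ∨ x = z 0) with
              rfl | rfl | rfl
            · exact hy1 ((hz_adj _ y).mp hadj)
            · exact hy2 hadj
            · exact hy1 ((hz_adj _ y).mp hadj))
        have := le_pathNu ⟨_, hcons⟩
        omega
  · -- case s = 0
    intro hs
    subst hs
    apply le_antisymm
    · apply pathNu_le
      rintro n ⟨P, hP⟩
      by_cases hzf : ∀ (a : Fin n) (jx : Fin 1), z jx ∉ P a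
      · refine le_trans (le_trans (le_pathNu ⟨P, matching_G_to_induced hP ?_⟩)
          (le_max_left _ _)) (le_max_left _ _)
        intro a x hx
        simp only [Set.mem_compl_iff, Set.mem_range, not_exists]
        intro jx hjx
        exact hzf a jx (hjx ▸ hx)
      · push_neg at hzf
        obtain ⟨a0, j, hj⟩ := hzf
        rcases n with _ | n
        · exact a0.elim0
        obtain ⟨w, hw, hwne, hwadj⟩ := struct P hP a0 j hj
        have hv0 : v 0 ∈ P a0 := by rcases hw with h | h <;> simp [h]
        have hwP : w ∈ P a0 := by rcases hw with h | h <;> simp [h]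
        have hwmem : w ∈ Set.range z ∪ {v 1, v (-1)} := by
          rw [← hnv]
          exact hwadj
        have hP' := matching_drop hP a0
        rcases hwmem with ⟨j', rfl⟩ | hw1
        · exact absurd (congrArg z (Fin.ext (by omega) : j' = j)) hwne
        rcases hw1 with rfl | rfl
        · refine le_trans (le_trans ?_ (le_max_right _ _)) (le_max_left _ _)
          have hn' : n ≤ pathNu (inducedOn G (closedNbhd G ({v 0, v 1} : Set V))ᶜ) 3 := by
            refine le_pathNu ⟨_, matching_G_to_induced hP' ?_⟩
            intro b x hx
            obtain ⟨hne0, hnadj0⟩ := matching_avoid hP hv0 (Fin.succAbove_ne a0 b) hx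
            obtain ⟨hne1, hnadj1⟩ := matching_avoid hP hwP (Fin.succAbove_ne a0 b) hx
            exact (mem_cN2 (v 0) (v 1) x).mpr ⟨hne0, hne1, hnadj0, hnadj1⟩
          omega
        · refine le_trans ?_ (le_max_right _ _)
          have hn' : n ≤ pathNu (inducedOn G (closedNbhd G ({v 0, v (-1)} : Set V))ᶜ) 3 := by
            refine le_pathNu ⟨_, matching_G_to_induced hP' ?_⟩
            intro b x hx
            obtain ⟨hne0, hnadj0⟩ := matching_avoid hP hv0 (Fin.succAbove_ne a0 b) hx
            obtain ⟨hne1, hnadj1⟩ := matching_avoid hP hwP (Fin.succAbove_ne a0 b) hx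
            exact (mem_cN2 (v 0) (v (-1)) x).mpr ⟨hne0, hne1, hnadj0, hnadj1⟩
          omega
    · apply max_le
      · apply max_le
        · obtain ⟨P, hP⟩ := exists_matching_pathNu (inducedOn G (Set.range z)ᶜ)
          exact le_pathNu ⟨P, (matching_induced_to_G hP).1⟩
        · obtain ⟨P, hP⟩ :=
            exists_matching_pathNu (inducedOn G (closedNbhd G ({v 0, v 1} : Set V))ᶜ)
          obtain ⟨hPG, hPA⟩ := matching_induced_to_G hP
          have hcons := matching_cons hPG
            ((hz_adj 0 (v 0)).mpr rfl) hadj01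
            (fun h => hadj01.ne' ((hz_adj 0 (v 1)).mp h))
            hz0_ne_v1
            (fun i x hxq hxp => by
              obtain ⟨h1, h2, h3, h4⟩ := (mem_cN2 (v 0) (v 1) x).mp (hPA i x hxp)
              rcases (by simpa using hxq : x = z 0 ∨ x = v 0 ∨ x = v 1) with rfl | rfl | rfl
              · exact h3 (hzv0 _)
              · exact h1 rfl
              · exact h2 rfl)
            (fun x hxq i y hyp hadj => by
              obtain ⟨h1, h2, h3, h4⟩ := (mem_cN2 (v 0) (v 1) y).mp (hPA i y hyp)
              rcases (by simpa using hxq : x = z 0 ∨ x = v 0 ∨ x = v 1) with rfl | rfl | rfl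
              · exact h1 ((hz_adj _ y).mp hadj)
              · exact h3 hadj
              · exact h4 hadj)
          have := le_pathNu ⟨_, hcons⟩
          omega
      · obtain ⟨P, hP⟩ :=
          exists_matching_pathNu (inducedOn G (closedNbhd G ({v 0, v (-1)} : Set V))ᶜ)
        obtain ⟨hPG, hPA⟩ := matching_induced_to_G hP
        have hcons := matching_cons hPG
          ((hz_adj 0 (v 0)).mpr rfl) hadjm0.symm
          (fun h => hadjm0.ne ((hz_adj 0 (v (-1))).mp h))
          hz0_ne_vm
          (fun i x hxq hxp => by
            obtain ⟨h1, h2, h3, h4⟩ := (mem_cN2 (v 0) (v (-1)) x).mp (hPA i x hxp)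
            rcases (by simpa using hxq : x = z 0 ∨ x = v 0 ∨ x = v (-1)) with rfl | rfl | rfl
            · exact h3 (hzv0 _)
            · exact h1 rfl
            · exact h2 rfl)
          (fun x hxq i y hyp hadj => by
            obtain ⟨h1, h2, h3, h4⟩ := (mem_cN2 (v 0) (v (-1)) y).mp (hPA i y hyp)
            rcases (by simpa using hxq : x = z 0 ∨ x = v 0 ∨ x = v (-1)) with rfl | rfl | rfl
            · exact h1 ((hz_adj _ y).mp hadj)
            · exact h3 hadj
            · exact h4 hadj)
        have := le_pathNu ⟨_, hcons⟩
        omega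

end PathIdeals
end
end

section
/- Let G be a finite simple graph and y a vertex of G. Then the colon ideal satisfies I_3(G) : y = (uv : u ≠ v ∈ N(y)) + (uw : u ∈ N(y), w ∈ N(u) \ N[y]) + I_3(G_2), where G_2 is the induced subgraph of G on V(G) \ N[y]. -/
noncomputable section

namespace PathIdeals

open MvPolynomial

variable {k : Type*} [Field k] {V : Type*} [Fintype V] [LinearOrder V]

/-! ### Auxiliary lemmas for the colon computation -/

section ColonAux

variable {k₀ : Type*} [Field k₀] {W : Type*}

private lemma prodX_eq (l : List W) :
    ((l.map X).prod : MvPolynomial W k₀) =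
      monomial (l.map fun v => Finsupp.single v 1).sum 1 := by
  induction l with
  | nil => simp
  | cons a l ih =>
      rw [List.map_cons, List.prod_cons, ih, List.map_cons, List.sum_cons,
        monomial_single_add, pow_one]

/-- The exponent vectors of the `t`-path monomials of `G`. -/
private def pathSet (G : SimpleGraph W) (t : ℕ) : Set (W →₀ ℕ) :=
  {s | ∃ l : List W, IsPathList G t l ∧ s = (l.map fun v => Finsupp.single v 1).sum}

private lemma pathIdeal_eq_span (k₀ : Type*) [Field k₀] (G : SimpleGraph W) :
    pathIdeal k₀ G 3 = Ideal.span ((fun s => monomial s (1 : k₀)) '' pathSet G 3) := by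
  unfold pathIdeal
  congr 1
  ext f
  constructor
  · rintro ⟨l, hl, rfl⟩
    exact ⟨_, ⟨l, hl, rfl⟩, (prodX_eq l).symm⟩
  · rintro ⟨s, ⟨l, hl, rfl⟩, rfl⟩
    exact ⟨l, hl, (prodX_eq l).symm⟩

/-- Exponent vectors `e_u + e_w` with `u ≠ w` both neighbors of `y`. -/
private def T1 (G : SimpleGraph W) (y : W) : Set (W →₀ ℕ) :=
  {s | ∃ u w, u ∈ G.neighborSet y ∧ w ∈ G.neighborSet y ∧ u ≠ w ∧
    s = Finsupp.single u 1 + Finsupp.single w 1}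

/-- Exponent vectors `e_u + e_w` with `u ∈ N(y)`, `w ∈ N(u) \ N[y]`. -/
private def T2 (G : SimpleGraph W) (y : W) : Set (W →₀ ℕ) :=
  {s | ∃ u w, u ∈ G.neighborSet y ∧ w ∈ G.neighborSet u ∧ w ∉ closedNbhd G {y} ∧
    s = Finsupp.single u 1 + Finsupp.single w 1}

private lemma Xmul_eq (u w : W) : (X u * X w : MvPolynomial W k₀) =
    monomial (Finsupp.single u 1 + Finsupp.single w 1) 1 := by
  rw [monomial_single_add, pow_one, ← X_pow_eq_monomial, pow_one]

private lemma span1_eq (k₀ : Type*) [Field k₀] (G : SimpleGraph W) (y : W) :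
    Ideal.span {f : MvPolynomial W k₀ |
        ∃ u w, u ∈ G.neighborSet y ∧ w ∈ G.neighborSet y ∧ u ≠ w ∧ f = X u * X w} =
      Ideal.span ((fun s => monomial s (1 : k₀)) '' T1 G y) := by
  congr 1
  ext f
  constructor
  · rintro ⟨u, w, h1, h2, h3, rfl⟩
    exact ⟨_, ⟨u, w, h1, h2, h3, rfl⟩, (Xmul_eq u w).symm⟩
  · rintro ⟨s, ⟨u, w, h1, h2, h3, rfl⟩, rfl⟩
    exact ⟨u, w, h1, h2, h3, (Xmul_eq u w).symm⟩

private lemma span2_eq (k₀ : Type*) [Field k₀] (G : SimpleGraph W) (y : W) :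
    Ideal.span {f : MvPolynomial W k₀ |
        ∃ u w, u ∈ G.neighborSet y ∧ w ∈ G.neighborSet u ∧ w ∉ closedNbhd G {y} ∧
          f = X u * X w} =
      Ideal.span ((fun s => monomial s (1 : k₀)) '' T2 G y) := by
  congr 1
  ext f
  constructor
  · rintro ⟨u, w, h1, h2, h3, rfl⟩
    exact ⟨_, ⟨u, w, h1, h2, h3, rfl⟩, (Xmul_eq u w).symm⟩
  · rintro ⟨s, ⟨u, w, h1, h2, h3, rfl⟩, rfl⟩
    exact ⟨u, w, h1, h2, h3, (Xmul_eq u w).symm⟩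

private lemma not_mem_closedNbhd {G : SimpleGraph W} {y w : W}
    (h1 : w ≠ y) (h2 : ¬ G.Adj y w) : w ∉ closedNbhd G {y} := by
  rintro (h | ⟨x, hx, hadj⟩)
  · exact h1 h
  · rw [Set.mem_singleton_iff] at hx
    subst hx
    exact h2 hadj

private lemma of_not_mem_closedNbhd {G : SimpleGraph W} {y w : W}
    (h : w ∉ closedNbhd G {y}) : w ≠ y ∧ ¬ G.Adj y w := by
  constructor
  · rintro rfl
    exact h (Or.inl rfl)
  · intro hadj
    exact h (Or.inr ⟨y, rfl, hadj⟩)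

private lemma le_of_apply_eq_zero {s m : W →₀ ℕ} {y : W}
    (h : s ≤ m + Finsupp.single y 1) (h0 : s y = 0) : s ≤ m := by
  rw [Finsupp.le_def] at h ⊢
  intro v
  by_cases hv : v = y
  · subst hv
    simp [h0]
  · have hv' := h v
    simpa [Finsupp.add_apply, Finsupp.single_apply, Ne.symm hv] using hv'

end ColonAux

/-- **Lemma (colon of a 3-path ideal by a vertex).**
Let `G` be a finite simple graph and `y` a vertex of `G`.  Then
`I_3(G) : y = (uv : u ≠ v ∈ N(y)) + (uw : u ∈ N(y), w ∈ N(u) \ N[y]) + I_3(G_2)`,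
where `G_2` is the induced subgraph of `G` on `V(G) \ N[y]`. -/
theorem pathIdeal_three_colon_vertex
    (k : Type*) [Field k] {V : Type*}
    (G : SimpleGraph V) (y : V) :
    Submodule.colon (pathIdeal k G 3) (Ideal.span {(X y : MvPolynomial V k)}) =
      Ideal.span {f : MvPolynomial V k |
          ∃ u w, u ∈ G.neighborSet y ∧ w ∈ G.neighborSet y ∧ u ≠ w ∧ f = X u * X w} +
        Ideal.span {f : MvPolynomial V k |
          ∃ u w, u ∈ G.neighborSet y ∧ w ∈ G.neighborSet u ∧ w ∉ closedNbhd G {y} ∧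
            f = X u * X w} +
        pathIdeal k (inducedOn G (closedNbhd G {y})ᶜ) 3 := by
  classical
  rw [span1_eq k G y, span2_eq k G y, pathIdeal_eq_span k (inducedOn G (closedNbhd G {y})ᶜ),
    Submodule.add_eq_sup, Submodule.add_eq_sup, ← Ideal.span_union, ← Ideal.span_union,
    ← Set.image_union, ← Set.image_union]
  ext f
  rw [Ideal.mem_colon_span_singleton, pathIdeal_eq_span k G, mem_ideal_span_monomial_image,
    mem_ideal_span_monomial_image]
  constructor
  · -- the colon ideal is contained in the right-hand side
    intro h m hm
    have hm' : m + Finsupp.single y 1 ∈ (f * X y).support := by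
      rw [support_mul_X]
      exact Finset.mem_map_of_mem _ hm
    obtain ⟨s, ⟨l, hpl, hs⟩, hle⟩ := h _ hm'
    obtain ⟨a, b, c, rfl⟩ := List.length_eq_three.mp hpl.1
    have hnd := hpl.2.1
    rw [List.nodup_cons, List.nodup_cons] at hnd
    have hab : a ≠ b := fun hh => hnd.1 (by simp [hh])
    have hac : a ≠ c := fun hh => hnd.1 (by simp [hh])
    have hbc : b ≠ c := fun hh => hnd.2.1 (by simp [hh])
    have hch := hpl.2.2
    rw [List.Chain', List.isChain_cons_cons, List.isChain_cons_cons] at hch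
    have hadj1 : G.Adj a b := hch.1
    have hadj2 : G.Adj b c := hch.2.1
    simp only [List.map_cons, List.map_nil, List.sum_cons, List.sum_nil, add_zero] at hs
    subst hs
    by_cases hya : y = a
    · -- the path starts at `y`
      subst hya
      have h2 : Finsupp.single b 1 + Finsupp.single c 1 ≤ m := by
        rw [add_comm m] at hle
        exact le_of_add_le_add_left hle
      by_cases hadjc : G.Adj y c
      · exact ⟨_, Set.mem_union_left _ (Set.mem_union_left _
          ⟨b, c, hadj1, hadjc, hbc, rfl⟩), h2⟩
      · exact ⟨_, Set.mem_union_left _ (Set.mem_union_right _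
          ⟨b, c, hadj1, hadj2, not_mem_closedNbhd (Ne.symm hac) hadjc, rfl⟩), h2⟩
    by_cases hyb : y = b
    · -- the path has `y` as middle vertex
      subst hyb
      have h2 : Finsupp.single a 1 + Finsupp.single c 1 ≤ m := by
        rw [add_left_comm] at hle
        rw [add_comm m] at hle
        exact le_of_add_le_add_left hle
      exact ⟨_, Set.mem_union_left _ (Set.mem_union_left _
        ⟨a, c, hadj1.symm, hadj2, hac, rfl⟩), h2⟩
    by_cases hyc : y = c
    · -- the path ends at `y`
      subst hyc
      have h2 : Finsupp.single a 1 + Finsupp.single b 1 ≤ m := by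
        have heq : Finsupp.single a 1 + (Finsupp.single b 1 + Finsupp.single y 1) =
            Finsupp.single y 1 + (Finsupp.single a 1 + Finsupp.single b 1) := by abel
        rw [heq, add_comm m] at hle
        exact le_of_add_le_add_left hle
      by_cases hadja : G.Adj y a
      · exact ⟨_, Set.mem_union_left _ (Set.mem_union_left _
          ⟨a, b, hadja, hadj2.symm, hab, rfl⟩), h2⟩
      · refine ⟨_, Set.mem_union_left _ (Set.mem_union_right _
          ⟨b, a, hadj2.symm, hadj1.symm, not_mem_closedNbhd hac hadja, rfl⟩), ?_⟩
        rw [add_comm]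
        exact h2
    -- the path avoids `y`
    have hsm : Finsupp.single a 1 + (Finsupp.single b 1 + Finsupp.single c 1) ≤ m := by
      refine le_of_apply_eq_zero hle ?_
      simp [Finsupp.single_apply, Ne.symm hya, Ne.symm hyb, Ne.symm hyc]
    have hsub1 : Finsupp.single a 1 + Finsupp.single b 1 ≤ m :=
      le_trans (add_le_add_right (self_le_add_right _ _) _) hsm
    have hsub2 : Finsupp.single b 1 + Finsupp.single c 1 ≤ m :=
      le_trans (le_add_self) hsm
    by_cases h2 : G.Adj y b
    · by_cases h1 : G.Adj y a
      · exact ⟨_, Set.mem_union_left _ (Set.mem_union_left _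
          ⟨a, b, h1, h2, hab, rfl⟩), hsub1⟩
      · refine ⟨_, Set.mem_union_left _ (Set.mem_union_right _
          ⟨b, a, h2, hadj1.symm, not_mem_closedNbhd (Ne.symm hya) h1, rfl⟩), ?_⟩
        rw [add_comm]
        exact hsub1
    by_cases h1 : G.Adj y a
    · exact ⟨_, Set.mem_union_left _ (Set.mem_union_right _
        ⟨a, b, h1, hadj1, not_mem_closedNbhd (Ne.symm hyb) h2, rfl⟩), hsub1⟩
    by_cases h3 : G.Adj y c
    · refine ⟨_, Set.mem_union_left _ (Set.mem_union_right _
        ⟨c, b, h3, hadj2.symm, not_mem_closedNbhd (Ne.symm hyb) h2, rfl⟩), ?_⟩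
      rw [add_comm]
      exact hsub2
    · -- all three vertices lie outside `N[y]`: a path of the induced subgraph
      have hmema : a ∈ (closedNbhd G {y})ᶜ := not_mem_closedNbhd (Ne.symm hya) h1
      have hmemb : b ∈ (closedNbhd G {y})ᶜ := not_mem_closedNbhd (Ne.symm hyb) h2
      have hmemc : c ∈ (closedNbhd G {y})ᶜ := not_mem_closedNbhd (Ne.symm hyc) h3
      refine ⟨_, Set.mem_union_right _ ⟨[a, b, c], ⟨hpl.1, hpl.2.1, ?_⟩, by simp⟩, hsm⟩
      rw [List.Chain', List.isChain_cons_cons, List.isChain_cons_cons]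
      exact ⟨⟨hadj1, hmema, hmemb⟩, ⟨hadj2, hmemb, hmemc⟩, List.isChain_singleton c⟩
  · -- the right-hand side is contained in the colon ideal
    intro h m hm
    rw [support_mul_X] at hm
    obtain ⟨m', hm', rfl⟩ := Finset.mem_map.mp hm
    obtain ⟨t, ht, hle⟩ := h m' hm'
    rw [Set.mem_union, Set.mem_union] at ht
    rcases ht with (⟨u, w, hu, hw, huw, rfl⟩ | ⟨u, w, hu, hw, hwc, rfl⟩) | ⟨l, hpl, rfl⟩
    · -- generators `x_u x_w` with `u, w ∈ N(y)`: use the path `u, y, w`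
      have hu' : G.Adj y u := hu
      have hw' : G.Adj y w := hw
      refine ⟨_, ⟨[u, y, w], ⟨rfl, ?_, ?_⟩, rfl⟩, ?_⟩
      · simp [hu'.ne', huw, hw'.ne]
      · rw [List.Chain', List.isChain_cons_cons, List.isChain_cons_cons]
        exact ⟨hu'.symm, hw', List.isChain_singleton w⟩
      · show (([u, y, w]).map fun v => Finsupp.single v 1).sum ≤ m' + Finsupp.single y 1
        simp only [List.map_cons, List.map_nil, List.sum_cons, List.sum_nil, add_zero]
        have heq : Finsupp.single u 1 + (Finsupp.single y 1 + Finsupp.single w 1) =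
            (Finsupp.single u 1 + Finsupp.single w 1) + Finsupp.single y 1 := by abel
        rw [heq]
        exact add_le_add_left hle _
    · -- generators `x_u x_w` with `u ∈ N(y)`, `w ∈ N(u) \ N[y]`: use the path `w, u, y`
      have hu' : G.Adj y u := hu
      have hw' : G.Adj u w := hw
      obtain ⟨hwy, _⟩ := of_not_mem_closedNbhd hwc
      refine ⟨_, ⟨[w, u, y], ⟨rfl, ?_, ?_⟩, rfl⟩, ?_⟩
      · simp [hw'.ne', hwy, hu'.ne']
      · rw [List.Chain', List.isChain_cons_cons, List.isChain_cons_cons]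
        exact ⟨hw'.symm, hu'.symm, List.isChain_singleton y⟩
      · show (([w, u, y]).map fun v => Finsupp.single v 1).sum ≤ m' + Finsupp.single y 1
        simp only [List.map_cons, List.map_nil, List.sum_cons, List.sum_nil, add_zero]
        have heq : Finsupp.single w 1 + (Finsupp.single u 1 + Finsupp.single y 1) =
            (Finsupp.single u 1 + Finsupp.single w 1) + Finsupp.single y 1 := by abel
        rw [heq]
        exact add_le_add_left hle _
    · -- paths of the induced subgraph are paths of `G`
      refine ⟨_, ⟨l, ⟨hpl.1, hpl.2.1, List.IsChain.imp (fun _ _ hh => hh.1) hpl.2.2⟩, rfl⟩, ?_⟩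
      exact le_trans hle (self_le_add_right _ _)

end PathIdeals
end
end
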